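/- (Bruhat decomposition of GL_n) Let k be a field and n ≥ 1. For every g ∈ GL_n(k) there exists a unique permutation π ∈ S_n such that g ∈ B a_π B; that is, GL_n(k) is the disjoint union over π ∈ S_n of the double cosets B a_π B. -/

import Mathlib

/-- The set `B` of invertible upper triangular `n × n` matrices over `k`. -/
def upperTriangularUnits (k : Type*) [Field k] (n : ℕ) : Set (Matrix (Fin n) (Fin n) k) :=
  {b | IsUnit b.det ∧ ∀ i j : Fin n, j < i → b i j = 0}

/-- The permutation matrix `a_π`, with `(a_π)_{ij} = 1` iff `i = π j`. -/
def permMat (k : Type*) [Field k] {n : ℕ} (π : Equiv.Perm (Fin n)) :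
    Matrix (Fin n) (Fin n) k :=
  Matrix.of fun i j => if i = π j then 1 else 0

namespace BruhatAux

variable {k : Type*} [Field k] {n : ℕ}

lemma one_mem : (1 : Matrix (Fin n) (Fin n) k) ∈ upperTriangularUnits k n :=
  ⟨by simp, fun i j h => Matrix.one_apply_ne (ne_of_gt h)⟩

lemma mul_mem {a b : Matrix (Fin n) (Fin n) k} (ha : a ∈ upperTriangularUnits k n)
    (hb : b ∈ upperTriangularUnits k n) : a * b ∈ upperTriangularUnits k n := by
  refine ⟨by rw [Matrix.det_mul]; exact ha.1.mul hb.1, fun i j h => ?_⟩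
  rw [Matrix.mul_apply]
  apply Finset.sum_eq_zero
  intro t _
  rcases lt_or_ge t i with ht | ht
  · rw [ha.2 i t ht, zero_mul]
  · rw [hb.2 t j (lt_of_lt_of_le h ht), mul_zero]

lemma blockTri {b : Matrix (Fin n) (Fin n) k} (hb : b ∈ upperTriangularUnits k n) :
    b.BlockTriangular id := fun i j h => hb.2 i j h

lemma inv_mem {b : Matrix (Fin n) (Fin n) k} (hb : b ∈ upperTriangularUnits k n) :
    b⁻¹ ∈ upperTriangularUnits k n := by
  haveI := b.invertibleOfIsUnitDet hb.1
  exact ⟨b.isUnit_nonsing_inv_det hb.1,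
    fun i j h => Matrix.blockTriangular_inv_of_blockTriangular (blockTri hb) h⟩

lemma diag_ne_zero {b : Matrix (Fin n) (Fin n) k} (hb : b ∈ upperTriangularUnits k n)
    (i : Fin n) : b i i ≠ 0 := by
  have hd := hb.1
  rw [Matrix.det_of_upperTriangular (blockTri hb)] at hd
  have := hd.ne_zero
  rw [Finset.prod_ne_zero_iff] at this
  exact this i (Finset.mem_univ i)

lemma mul_permMat (X : Matrix (Fin n) (Fin n) k) (π : Equiv.Perm (Fin n)) :
    X * permMat k π = X.submatrix id π := by
  ext i j
  rw [Matrix.mul_apply, Matrix.submatrix_apply]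
  rw [Finset.sum_eq_single (π j) (fun t _ ht => by simp [permMat, ht]) (by simp)]
  simp [permMat]

lemma permMat_mul (X : Matrix (Fin n) (Fin n) k) (π : Equiv.Perm (Fin n)) :
    permMat k π * X = X.submatrix (⇑π.symm) id := by
  ext i j
  rw [Matrix.mul_apply, Matrix.submatrix_apply]
  rw [Finset.sum_eq_single (π.symm i)
    (fun t _ ht => by
      have : i ≠ π t := fun h => ht (by rw [h, Equiv.symm_apply_apply])
      simp [permMat, this]) (by simp)]
  simp [permMat]

lemma perm_le {π σ : Equiv.Perm (Fin n)} {u v : Matrix (Fin n) (Fin n) k}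
    (hu : u ∈ upperTriangularUnits k n) (hv : v ∈ upperTriangularUnits k n)
    (h : permMat k π * u = v * permMat k σ) (j : Fin n) : π j ≤ σ j := by
  rw [permMat_mul, mul_permMat] at h
  have h2 := congrFun (congrFun h (π j)) j
  simp only [Matrix.submatrix_apply, id, Equiv.symm_apply_apply] at h2
  by_contra hlt
  rw [not_le] at hlt
  exact diag_ne_zero hu j (h2.trans (hv.2 (π j) (σ j) hlt))

variable {k : Type*} [Field k] {n : ℕ}

/-- Extend an `n × n` matrix to an `(n+1) × (n+1)` matrix by inserting a new row and
column at position `p0`, with diagonal entry `c` there and zeros elsewhere in that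
row/column. -/
def ext1 (p0 : Fin (n + 1)) (A : Matrix (Fin n) (Fin n) k) (c : k) :
    Matrix (Fin (n + 1)) (Fin (n + 1)) k :=
  Matrix.of fun x y =>
    (finSuccEquiv' p0 x).elim ((finSuccEquiv' p0 y).elim c fun _ => 0)
      fun m => (finSuccEquiv' p0 y).elim 0 fun m' => A m m'

variable {p0 : Fin (n + 1)} {A : Matrix (Fin n) (Fin n) k} {c : k}

@[simp] lemma ext1_pp : ext1 p0 A c p0 p0 = c := by simp [ext1]

@[simp] lemma ext1_ps (m : Fin n) : ext1 p0 A c p0 (p0.succAbove m) = 0 := by simp [ext1]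

@[simp] lemma ext1_sp (m : Fin n) : ext1 p0 A c (p0.succAbove m) p0 = 0 := by simp [ext1]

@[simp] lemma ext1_ss (m m' : Fin n) :
    ext1 p0 A c (p0.succAbove m) (p0.succAbove m') = A m m' := by simp [ext1]

lemma ext1_ut (hA : ∀ i j, j < i → A i j = 0) :
    ∀ x y, y < x → ext1 p0 A c x y = 0 := by
  intro x y hyx
  rcases eq_or_ne x p0 with rfl | hx
  · rcases eq_or_ne y x with rfl | hy
    · exact absurd hyx (lt_irrefl _)
    · obtain ⟨m, rfl⟩ := Fin.exists_succAbove_eq hy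
      exact ext1_ps m
  · obtain ⟨m, rfl⟩ := Fin.exists_succAbove_eq hx
    rcases eq_or_ne y p0 with rfl | hy
    · exact ext1_sp m
    · obtain ⟨m', rfl⟩ := Fin.exists_succAbove_eq hy
      rw [ext1_ss]
      exact hA m m' (by rwa [Fin.succAbove_lt_succAbove_iff] at hyx)

lemma ext1_mem (hA : A ∈ upperTriangularUnits k n) (hc : c ≠ 0) :
    ext1 p0 A c ∈ upperTriangularUnits k (n + 1) := by
  refine ⟨?_, ext1_ut hA.2⟩
  rw [Matrix.det_of_upperTriangular (fun x y (h : (y:Fin (n+1)) < x) => ext1_ut hA.2 x y h)]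
  rw [Fin.prod_univ_succAbove (fun x => ext1 p0 A c x x) p0]
  simp only [ext1_pp, ext1_ss]
  rw [isUnit_iff_ne_zero]
  apply mul_ne_zero hc
  have hd := hA.1
  rw [Matrix.det_of_upperTriangular (fun i j (h : (j:Fin n) < i) => hA.2 i j h)] at hd
  exact hd.ne_zero

lemma bruhat_exists : ∀ (n : ℕ) (g : Matrix (Fin n) (Fin n) k), IsUnit g.det →
    ∃ (π : Equiv.Perm (Fin n)) (b b' : Matrix (Fin n) (Fin n) k),
      b ∈ upperTriangularUnits k n ∧ b' ∈ upperTriangularUnits k n ∧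
        g = b * permMat k π * b' := by
  intro n
  induction n with
  | zero => exact fun g _ => ⟨1, 1, 1, one_mem, one_mem, Subsingleton.elim _ _⟩
  | succ n ih =>
    intro g hg
    classical
    set lst := Fin.last n with hlst
    -- the pivot column: leftmost nonzero entry of the bottom row
    have hrow : ∃ j, g lst j ≠ 0 := by
      by_contra h
      push_neg at h
      exact hg.ne_zero (Matrix.det_eq_zero_of_row_eq_zero lst h)
    obtain ⟨jw, hjw⟩ := hrow
    obtain ⟨j₀, hp, hmin⟩ : ∃ j₀, g lst j₀ ≠ 0 ∧ ∀ j, j < j₀ → g lst j = 0 := by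
      obtain ⟨j₀, hmem, hle⟩ := Finset.exists_min_image
        (Finset.univ.filter fun j => g lst j ≠ 0) id ⟨jw, by simp [hjw]⟩
      rw [Finset.mem_filter] at hmem
      refine ⟨j₀, hmem.2, fun j hj => ?_⟩
      by_contra h
      exact absurd (hle j (by simp [h])) (not_le.mpr hj)
    -- column operations clearing the bottom row right of j₀
    set C : Matrix (Fin (n + 1)) (Fin (n + 1)) k :=
      Matrix.of (fun s j => if s = j₀ ∧ j₀ < j then -(g lst j) / (g lst j₀) else 0) with hC
    have hCC : C * C = 0 := by
      ext i j
      rw [Matrix.mul_apply, Matrix.zero_apply]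
      apply Finset.sum_eq_zero
      intro t _
      rcases eq_or_ne t j₀ with rfl | ht
      · simp [hC]
      · simp [hC, ht]
    have hCut : ∀ i j : Fin (n + 1), j < i → C i j = 0 := by
      intro i j hij
      rw [hC]
      simp only [Matrix.of_apply, ite_eq_right_iff]
      rintro ⟨rfl, hlt⟩
      exact absurd hlt (not_lt.mpr hij.le)
    set R : Matrix (Fin (n + 1)) (Fin (n + 1)) k := 1 + C with hR
    set Ri : Matrix (Fin (n + 1)) (Fin (n + 1)) k := 1 - C with hRi
    have hRRi : R * Ri = 1 := by
      rw [hR, hRi]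
      simp only [mul_sub, sub_mul, mul_add, add_mul, one_mul, mul_one, hCC]
      abel
    have hRiR : Ri * R = 1 := by
      rw [hR, hRi]
      simp only [mul_sub, sub_mul, mul_add, add_mul, one_mul, mul_one, hCC]
      abel
    -- row operations clearing the pivot column above the bottom row
    set D : Matrix (Fin (n + 1)) (Fin (n + 1)) k :=
      Matrix.of (fun i s => if s = lst ∧ i ≠ lst then -(g i j₀) / (g lst j₀) else 0) with hD
    have hDD : D * D = 0 := by
      ext i j
      rw [Matrix.mul_apply, Matrix.zero_apply]
      apply Finset.sum_eq_zero
      intro t _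
      rcases eq_or_ne t lst with rfl | ht
      · simp [hD]
      · simp [hD, ht]
    have hDut : ∀ i j : Fin (n + 1), j < i → D i j = 0 := by
      intro i j hij
      rw [hD]
      simp only [Matrix.of_apply, ite_eq_right_iff]
      rintro ⟨rfl, -⟩
      exact absurd hij (not_lt.mpr (Fin.le_last i))
    set L : Matrix (Fin (n + 1)) (Fin (n + 1)) k := 1 + D with hL
    set Li : Matrix (Fin (n + 1)) (Fin (n + 1)) k := 1 - D with hLi
    have hLLi : L * Li = 1 := by
      rw [hL, hLi]
      simp only [mul_sub, sub_mul, mul_add, add_mul, one_mul, mul_one, hDD]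
      abel
    have hLiL : Li * L = 1 := by
      rw [hL, hLi]
      simp only [mul_sub, sub_mul, mul_add, add_mul, one_mul, mul_one, hDD]
      abel
    -- the reduced matrix M
    set M₁ : Matrix (Fin (n + 1)) (Fin (n + 1)) k := g + g * C with hM₁
    have hgC : ∀ i j, (g * C) i j = g i j₀ * C j₀ j := by
      intro i j
      rw [Matrix.mul_apply]
      rw [Finset.sum_eq_single j₀ (fun t _ ht => by simp [hC, ht]) (by simp)]
    have hM₁eq : g * R = M₁ := by rw [hR, mul_add, mul_one, hM₁]
    have hM₁bot : ∀ j, M₁ lst j = if j = j₀ then g lst j₀ else 0 := by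
      intro j
      rw [hM₁, Matrix.add_apply, hgC]
      rcases eq_or_ne j j₀ with rfl | hj
      · rw [if_pos rfl, hC]
        simp [Matrix.of_apply]
      · rw [if_neg hj]
        rcases lt_or_gt_of_ne hj with hlt | hgt
        · rw [hmin j hlt, hC]
          simp [not_lt.mpr hlt.le]
        · rw [hC, Matrix.of_apply, if_pos (show j₀ = j₀ ∧ j₀ < j from ⟨rfl, hgt⟩)]
          field_simp
          ring
    have hM₁col : ∀ i, M₁ i j₀ = g i j₀ := by
      intro i
      rw [hM₁, Matrix.add_apply, hgC]
      simp [hC]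
    set M : Matrix (Fin (n + 1)) (Fin (n + 1)) k := M₁ + D * M₁ with hM
    have hMeq : L * (g * R) = M := by rw [hM₁eq, hL, add_mul, one_mul, hM]
    have hDX : ∀ (X : Matrix (Fin (n + 1)) (Fin (n + 1)) k) i j,
        (D * X) i j = D i lst * X lst j := by
      intro X i j
      rw [Matrix.mul_apply]
      rw [Finset.sum_eq_single lst (fun t _ ht => by simp [hD, ht]) (by simp)]
    have hMbot : ∀ j, M lst j = if j = j₀ then g lst j₀ else 0 := by
      intro j
      rw [hM, Matrix.add_apply, hDX, hM₁bot]
      simp [hD]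
    have hMcol : ∀ i, i ≠ lst → M i j₀ = 0 := by
      intro i hi
      rw [hM, Matrix.add_apply, hDX, hM₁bot, hM₁col, if_pos rfl, hD,
        Matrix.of_apply, if_pos (show lst = lst ∧ i ≠ lst from ⟨rfl, hi⟩)]
      field_simp
      ring
    -- g in terms of M
    have hg_eq : g = Li * M * Ri := by
      rw [← hMeq]
      calc g = (Li * L) * (g * (R * Ri)) := by rw [hLiL, hRRi, one_mul, mul_one]
        _ = Li * (L * (g * R)) * Ri := by
            simp only [Matrix.mul_assoc]
    -- the smaller matrix
    set g' : Matrix (Fin n) (Fin n) k := M.submatrix Fin.castSucc j₀.succAbove with hg'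
    have hdetM : IsUnit M.det := by
      rw [← hMeq, Matrix.det_mul, Matrix.det_mul]
      exact (Matrix.isUnit_det_of_right_inverse hLLi).mul
        (hg.mul (Matrix.isUnit_det_of_right_inverse hRRi))
    have hdetg' : IsUnit g'.det := by
      have hexp := Matrix.det_succ_row M lst
      rw [Finset.sum_eq_single j₀ (fun t _ ht => by rw [hMbot, if_neg ht]; ring) (by simp)]
        at hexp
      rw [hMbot, if_pos rfl] at hexp
      rw [isUnit_iff_ne_zero]
      intro h0
      rw [hlst, Fin.succAbove_last, ← hg'] at hexp
      rw [h0, mul_zero] at hexp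
      exact hdetM.ne_zero hexp
    obtain ⟨π', b₁, b₁', hb₁, hb₁', hfac⟩ := ih g' hdetg'
    -- the permutation
    set π : Equiv.Perm (Fin (n + 1)) :=
      (finSuccEquiv' j₀).trans ((π'.optionCongr).trans (finSuccEquiv' lst).symm) with hπdef
    have hπ0 : π j₀ = lst := by
      simp [hπdef]
    have hπs : ∀ m, π (j₀.succAbove m) = lst.succAbove (π' m) := by
      intro m
      simp [hπdef]
    -- the extended factors
    set B₁ : Matrix (Fin (n + 1)) (Fin (n + 1)) k := ext1 lst b₁ (g lst j₀) with hB₁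
    set B₂ : Matrix (Fin (n + 1)) (Fin (n + 1)) k := ext1 j₀ b₁' 1 with hB₂
    have hprod : B₁ * permMat k π * B₂ = M := by
      rw [mul_permMat]
      ext i j
      rw [Matrix.mul_apply, Fin.sum_univ_succAbove _ j₀]
      simp only [Matrix.submatrix_apply, id, hπ0, hπs, hB₁, hB₂]
      rcases eq_or_ne j j₀ with rfl | hj
      · rw [ext1_pp, mul_one]
        simp only [ext1_sp, mul_zero, Finset.sum_const_zero, add_zero]
        rcases eq_or_ne i lst with rfl | hi
        · rw [ext1_pp, hMbot, if_pos rfl]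
        · obtain ⟨l, rfl⟩ := Fin.exists_succAbove_eq hi
          rw [ext1_sp, hMcol _ hi]
      · obtain ⟨m', rfl⟩ := Fin.exists_succAbove_eq hj
        rw [ext1_ps, mul_zero, zero_add]
        simp only [ext1_ss]
        rcases eq_or_ne i lst with rfl | hi
        · simp only [ext1_ps, zero_mul, Finset.sum_const_zero]
          rw [hMbot, if_neg hj]
        · obtain ⟨l, rfl⟩ := Fin.exists_succAbove_eq hi
          simp only [ext1_ss]
          have : M (lst.succAbove l) (j₀.succAbove m') = g' l m' := by
            rw [hg', Matrix.submatrix_apply, hlst, Fin.succAbove_last]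
          rw [this, hfac, mul_permMat, Matrix.mul_apply]
          simp only [Matrix.submatrix_apply, id]
    refine ⟨π, Li * B₁, B₂ * Ri, ?_, ?_, ?_⟩
    · refine mul_mem ⟨Matrix.isUnit_det_of_right_inverse hLiL, fun i j h => ?_⟩
        (ext1_mem hb₁ hp)
      rw [hLi, Matrix.sub_apply, Matrix.one_apply_ne (ne_of_gt h), hDut i j h, sub_zero]
    · refine mul_mem (ext1_mem hb₁' one_ne_zero)
        ⟨Matrix.isUnit_det_of_right_inverse hRiR, fun i j h => ?_⟩
      rw [hRi, Matrix.sub_apply, Matrix.one_apply_ne (ne_of_gt h), hCut i j h, sub_zero]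
    · rw [hg_eq, ← hprod]
      simp only [Matrix.mul_assoc]


end BruhatAux

/-- (Bruhat decomposition of `GL_n`) For every invertible matrix `g ∈ GL_n(k)` there is a
unique permutation `π ∈ S_n` with `g ∈ B a_π B`; that is, `GL_n(k)` is the disjoint union
over `π ∈ S_n` of the double cosets `B a_π B`. -/
theorem stmt_5 (k : Type*) [Field k] (n : ℕ) (hn : 1 ≤ n)
    (g : Matrix (Fin n) (Fin n) k) (hg : IsUnit g.det) :
    ∃! π : Equiv.Perm (Fin n),
      ∃ b ∈ upperTriangularUnits k n, ∃ b' ∈ upperTriangularUnits k n,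
        g = b * permMat k π * b' := by
  obtain ⟨π, b, b', hb, hb', hfac⟩ := BruhatAux.bruhat_exists n g hg
  refine ⟨π, ⟨b, hb, b', hb', hfac⟩, ?_⟩
  rintro σ ⟨c, hc, c', hc', hfac'⟩
  have key : ∀ (α β : Equiv.Perm (Fin n)) (x x' y y' : Matrix (Fin n) (Fin n) k),
      x ∈ upperTriangularUnits k n → x' ∈ upperTriangularUnits k n →
      y ∈ upperTriangularUnits k n → y' ∈ upperTriangularUnits k n →
      x * permMat k α * x' = y * permMat k β * y' → ∀ j, α j ≤ β j := by
    intro α β x x' y y' hx hx' hy hy' heq j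
    have h1 : permMat k α * (x' * y'⁻¹) = (x⁻¹ * y) * permMat k β := by
      have e1 : x⁻¹ * (x * permMat k α * x') * y'⁻¹ = permMat k α * (x' * y'⁻¹) := by
        simp only [← Matrix.mul_assoc]
        rw [Matrix.nonsing_inv_mul _ hx.1, one_mul, Matrix.mul_assoc]
      have e2 : x⁻¹ * (y * permMat k β * y') * y'⁻¹ = (x⁻¹ * y) * permMat k β := by
        simp only [Matrix.mul_assoc]
        rw [Matrix.mul_nonsing_inv _ hy'.1, Matrix.mul_one]
      rw [← e1, heq, e2]
    exact BruhatAux.perm_le (BruhatAux.mul_mem hx' (BruhatAux.inv_mem hy'))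
      (BruhatAux.mul_mem (BruhatAux.inv_mem hx) hy) h1 j
  exact Equiv.ext fun j => le_antisymm
    (key σ π c c' b b' hc hc' hb hb' (hfac'.symm.trans hfac) j)
    (key π σ b b' c c' hb hb' hc hc' (hfac.symm.trans hfac') j)
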